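/- A regular language L over an alphabet Σ = {a₁,…,a_r} that is closed under permutations of words is determined by its Parikh image: there exists a finite family 𝒮 of r-tuples of arithmetic progressions S_{k,p} = {k + n·p : n ∈ ℕ} such that a word w belongs to L if and only if the Parikh vector Π(w) belongs to S₁ × ⋯ × S_r for some (S₁,…,S_r) ∈ 𝒮. -/
import Mathlib

open List

private lemma iter_event_per {σ : Type*} [Finite σ] (f : σ → σ) :
    ∃ k p, 0 < p ∧ ∀ n ≥ k, f^[n + p] = f^[n] := by
  obtain ⟨a, b, hab, heq⟩ := Finite.exists_ne_map_eq_of_infinite (fun n : ℕ => f^[n])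
  wlog h : a < b generalizing a b
  · exact this b a hab.symm heq.symm (by omega)
  refine ⟨a, b - a, by omega, fun n hn => ?_⟩
  obtain ⟨t, rfl⟩ : ∃ t, n = a + t := ⟨n - a, by omega⟩
  have h1 : a + t + (b - a) = t + b := by omega
  rw [h1, Function.iterate_add, ← heq, ← Function.iterate_add, Nat.add_comm]

private lemma iter_per_mul {σ : Type*} (f : σ → σ) {k p : ℕ}
    (h : ∀ n ≥ k, f^[n + p] = f^[n]) (m : ℕ) :
    ∀ n ≥ k, f^[n + p * m] = f^[n] := by
  induction m with
  | zero => simp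
  | succ m ih =>
    intro n hn
    have h1 : n + p * (m + 1) = (n + p * m) + p := by ring
    rw [h1, h _ (by omega), ih n hn]

private def canon (r : ℕ) (c : Fin r → ℕ) : List (Fin r) :=
  (List.finRange r).flatMap fun i => List.replicate (c i) i

private lemma count_canon (r : ℕ) (c : Fin r → ℕ) (i : Fin r) :
    (canon r c).count i = c i := by
  classical
  rw [canon, List.flatMap, List.count_flatten, List.map_map]
  have h1 : ∀ j ∈ List.finRange r, ((List.count i) ∘ fun j => List.replicate (c j) j) j
      = if j = i then c j else 0 := by
    intro j _
    simp only [Function.comp_apply, List.count_replicate, beq_iff_eq]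
  rw [List.map_congr_left h1, ← Fin.sum_univ_def]
  simp

private lemma perm_canon (r : ℕ) (w : List (Fin r)) :
    w.Perm (canon r fun i => w.count i) := by
  classical
  rw [List.perm_iff_count]
  intro a
  rw [count_canon]

/-- A permutation-closed regular language is determined by its Parikh
image via a finite family of tuples of arithmetic progressions. -/
theorem stmt_1 (r : ℕ) (L : Language (Fin r)) (hreg : L.IsRegular)
    (hperm : ∀ w w' : List (Fin r), w.Perm w' → (w ∈ L ↔ w' ∈ L)) :
    ∃ 𝒮 : Finset (Fin r → ℕ × ℕ),
      ∀ w : List (Fin r),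
        w ∈ L ↔ ∃ s ∈ 𝒮, ∀ i : Fin r, ∃ n : ℕ, w.count i = (s i).1 + n * (s i).2 := by
  classical
  obtain ⟨σ, _, M, rfl⟩ := hreg
  set f : Fin r → σ → σ := fun i q => M.step q i with hf
  choose k p hp hper using fun i : Fin r => iter_event_per (f i)
  set K : ℕ := ∑ i, k i with hK
  set P : ℕ := ∏ i, p i with hP
  have hPpos : 0 < P := Finset.prod_pos fun i _ => hp i
  have hperU : ∀ i : Fin r, ∀ n ≥ K, (f i)^[n + P] = (f i)^[n] := by
    intro i n hn
    obtain ⟨m, hm⟩ : p i ∣ P := Finset.dvd_prod_of_mem _ (Finset.mem_univ i)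
    rw [hm]
    have hnk : n ≥ k i := le_trans (Finset.single_le_sum (fun j _ => Nat.zero_le (k j))
      (Finset.mem_univ i)) hn
    exact iter_per_mul (f i) (hper i) m n hnk
  set ρ : ℕ → ℕ := fun n => if n < K then n else K + (n - K) % P with hρ
  have hiterρ : ∀ (i : Fin r) (n : ℕ), (f i)^[ρ n] = (f i)^[n] := by
    intro i n
    by_cases h : n < K
    · simp [hρ, h]
    · push_neg at h
      simp only [hρ, if_neg (not_lt.2 h)]
      have hdm := Nat.div_add_mod (n - K) P
      set s := (n - K) % P with hs
      set q2 := (n - K) / P with hq2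
      have hn : n = (K + s) + P * q2 := by omega
      rw [hn]
      exact (iter_per_mul (f i) (hperU i) q2 (K + s) (Nat.le_add_right _ _)).symm
  have heval : ∀ (c : Fin r → ℕ) (q : σ),
      M.evalFrom q (canon r c) = (List.finRange r).foldl (fun q i => (f i)^[c i] q) q := by
    intro c q
    have hrep : ∀ (i : Fin r) (n : ℕ) (q : σ),
        M.evalFrom q (List.replicate n i) = (f i)^[n] q := by
      intro i n
      induction n with
      | zero => intro q; rfl
      | succ n ih =>
        intro q
        rw [List.replicate_succ]
        show M.evalFrom (f i q) (List.replicate n i) = (f i)^[n+1] q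
        rw [ih, Function.iterate_succ_apply]
    suffices h : ∀ (l : List (Fin r)) (q : σ),
        M.evalFrom q (l.flatMap fun i => List.replicate (c i) i)
          = l.foldl (fun q i => (f i)^[c i] q) q from h _ q
    intro l
    induction l with
    | nil => intro q; rfl
    | cons a l ih =>
      intro q
      rw [List.flatMap_cons, M.evalFrom_of_append, hrep, List.foldl_cons, ih]
  have hmemρ : ∀ c : Fin r → ℕ,
      (canon r c ∈ M.accepts ↔ canon r (fun i => ρ (c i)) ∈ M.accepts) := by
    intro c
    rw [DFA.mem_accepts, DFA.mem_accepts]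
    show M.evalFrom M.start (canon r c) ∈ M.accept ↔
         M.evalFrom M.start (canon r fun i => ρ (c i)) ∈ M.accept
    rw [heval, heval]
    have h2 : (fun (q : σ) (i : Fin r) => (f i)^[c i] q)
         = (fun (q : σ) (i : Fin r) => (f i)^[ρ (c i)] q) := by
      funext q i; rw [hiterρ]
    rw [h2]
  refine ⟨(Finset.univ.filter (fun g : Fin r → Fin (K + P) =>
      canon r (fun i => (g i : ℕ)) ∈ M.accepts)).image
      (fun g i => (((g i : ℕ)), if (g i : ℕ) < K then 0 else P)), fun w => ?_⟩
  have hwL : w ∈ M.accepts ↔ canon r (fun i => w.count i) ∈ M.accepts :=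
    hperm _ _ (perm_canon r w)
  have hρlt : ∀ n, ρ n < K + P := by
    intro n
    by_cases h : n < K
    · simp only [hρ, if_pos h]; omega
    · simp only [hρ, if_neg h]
      have := Nat.mod_lt (n - K) hPpos
      omega
  constructor
  · intro hw
    set c : Fin r → ℕ := fun i => ρ (w.count i) with hc
    refine ⟨fun i => (c i, if c i < K then 0 else P), ?_, ?_⟩
    · refine Finset.mem_image.2 ⟨fun i => ⟨c i, hρlt _⟩,
        Finset.mem_filter.2 ⟨Finset.mem_univ _, ?_⟩, rfl⟩
      exact (hmemρ _).1 (hwL.1 hw)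
    · intro i
      by_cases h : w.count i < K
      · have h1 : c i = w.count i := by simp [hc, hρ, h]
        have hlt : c i < K := by omega
        refine ⟨0, ?_⟩
        show count i w = c i + 0 * (if c i < K then 0 else P)
        rw [if_pos hlt]; omega
      · push_neg at h
        have hci : c i = K + (w.count i - K) % P := by simp [hc, hρ, not_lt.2 h]
        have hcK : ¬ c i < K := by omega
        refine ⟨(w.count i - K) / P, ?_⟩
        show count i w = c i + (count i w - K) / P * (if c i < K then 0 else P)
        rw [if_neg hcK, hci]
        have hdm := Nat.mod_add_div' (count i w - K) P
        omega
  · rintro ⟨s, hs, hn⟩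
    obtain ⟨g, hg, rfl⟩ := Finset.mem_image.1 hs
    have hgacc := (Finset.mem_filter.1 hg).2
    have hρc : ∀ i, ρ (w.count i) = (g i : ℕ) := by
      intro i
      obtain ⟨n, hni⟩ := hn i
      by_cases h : (g i : ℕ) < K
      · simp only [if_pos h] at hni
        have h1 : w.count i = (g i : ℕ) := by omega
        simp [hρ, h1, h]
      · push_neg at h
        simp only [if_neg (not_lt.2 h)] at hni
        have hlt : (g i : ℕ) - K < P := by have := (g i).2; omega
        have h2 : ¬ w.count i < K := by omega
        simp only [hρ, if_neg h2]
        have h3 : (w.count i - K) % P = (g i : ℕ) - K := by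
          have h4 : w.count i - K = ((g i : ℕ) - K) + n * P := by omega
          rw [h4, Nat.add_mul_mod_self_right, Nat.mod_eq_of_lt hlt]
        omega
    apply hwL.2
    apply (hmemρ _).2
    have h5 : (fun i => ρ (w.count i)) = fun i => (g i : ℕ) := funext hρc
    rw [h5]
    exact hgacc
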